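/- The map g : ℤ⁺ → ℚ⁺ defined by g(x) = (k+1)/(m+1), where k is the number of occurrences of the digit 4 and m is the number of occurrences of the digit 7 in the decimal representation of x, is surjective. -/
import Mathlib


/-- The map `g : ℤ⁺ → ℚ⁺` with `g(x) = (k+1)/(m+1)`, where `k` and `m` are the number of
fours and sevens in the decimal representation of `x`, is surjective. -/
theorem stmt_8 :
    Function.Surjective
      (fun x : ℕ+ =>
        (⟨(((Nat.digits 10 (x : ℕ)).count 4 : ℚ) + 1) / (((Nat.digits 10 (x : ℕ)).count 7 : ℚ) + 1),
          by positivity⟩ : {q : ℚ // 0 < q})) := by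
  rintro ⟨q, hq⟩
  set a : ℕ := q.num.toNat with ha
  set b : ℕ := q.den with hb
  have ha0 : 0 < a := by
    have := Rat.num_pos.mpr hq
    omega
  have hb0 : 0 < b := q.pos
  set L : List ℕ := List.replicate (a - 1) 4 ++ List.replicate (b - 1) 7 ++ [1] with hL
  have hLne : L ≠ [] := by simp [hL]
  have hdig : Nat.digits 10 (Nat.ofDigits 10 L) = L := by
    apply Nat.digits_ofDigits 10 (by norm_num)
    · intro l hl
      rw [hL] at hl
      simp only [List.mem_append, List.mem_replicate, List.mem_singleton] at hl
      rcases hl with (⟨-, h⟩ | ⟨-, h⟩) | h <;> omega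
    · intro h
      have : L.getLast h = 1 := by
        simp [hL, List.getLast_append]
      simp [this]
  have hn0 : Nat.ofDigits 10 L ≠ 0 := by
    intro h
    rw [h] at hdig
    simp at hdig
    exact hLne hdig
  refine ⟨⟨Nat.ofDigits 10 L, Nat.pos_of_ne_zero hn0⟩, ?_⟩
  simp only [PNat.mk_coe, Subtype.mk.injEq]
  rw [hdig]
  have hc4 : L.count 4 = a - 1 := by
    simp [hL, List.count_append, List.count_replicate]
  have hc7 : L.count 7 = b - 1 := by
    simp [hL, List.count_append, List.count_replicate]
  rw [hc4, hc7]
  have h1 : ((a - 1 : ℕ) : ℚ) + 1 = (a : ℚ) := by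
    have : a - 1 + 1 = a := by omega
    exact_mod_cast congrArg (Nat.cast : ℕ → ℚ) this
  have h2 : ((b - 1 : ℕ) : ℚ) + 1 = (b : ℚ) := by
    have : b - 1 + 1 = b := by omega
    exact_mod_cast congrArg (Nat.cast : ℕ → ℚ) this
  rw [h1, h2]
  have hqa : (a : ℚ) = (q.num : ℚ) := by
    rw [ha]
    exact_mod_cast Int.toNat_of_nonneg (le_of_lt (Rat.num_pos.mpr hq))
  rw [hqa, hb]
  exact Rat.num_div_den q
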